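/- arXiv:1205.0755 — 3 statements merged into one kernel-verified Lean document; each statement's English description precedes it below -/
import Mathlib

section
/- Let c > 0 and B > 0 with cB < 1, and let ζ_0, ζ_1, …, ζ_J (J ∈ ℕ arbitrary) be nonnegative random variables on a common probability space (no independence assumed) such that E[exp(c' ζ_j²)] ≤ (1 − c'B)^{−1} for every j and every c' ∈ (0, c]. Set Y = Σ_{j=0}^{J} e^{−2j} ζ_j. Then there exist constants c* > 0 and C* > 0, depending only on c and B (and in particular independent of J and of the random variables), such that E[exp(c* Y²)] ≤ C*. -/
open MeasureTheory

/-- Exponential moments of a geometrically weighted sum: if `0 < c`, `0 < B`, `cB < 1`,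
and nonnegative random variables `ζ_0, …, ζ_J` satisfy
`E[exp(c' ζ_j²)] ≤ (1 − c'B)⁻¹` for all `0 < c' ≤ c`, then setting
`Y = Σ_{j=0}^J e^{−2j} ζ_j` one has `E[exp(c* Y²)] ≤ C*` for constants `c*, C* > 0`
depending only on `c` and `B` (independent of `J` and of the random variables). -/
theorem exp_moment_geometric_weighted_sum
    (c B : ℝ) (hc : 0 < c) (hB : 0 < B) (hcB : c * B < 1) :
    ∃ cs Cs : ℝ, 0 < cs ∧ 0 < Cs ∧
      ∀ (Ω : Type) (mΩ : MeasurableSpace Ω) (μ : Measure Ω), IsProbabilityMeasure μ →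
        ∀ (J : ℕ) (ζ : ℕ → Ω → ℝ),
          (∀ j, j ≤ J → Measurable (ζ j)) →
          (∀ j ω, j ≤ J → 0 ≤ ζ j ω) →
          (∀ j, j ≤ J → ∀ c' : ℝ, 0 < c' → c' ≤ c →
            ∫⁻ ω, ENNReal.ofReal (Real.exp (c' * ζ j ω ^ 2)) ∂μ ≤
              ENNReal.ofReal ((1 - c' * B)⁻¹)) →
          ∫⁻ ω, ENNReal.ofReal
              (Real.exp (cs * (∑ j ∈ Finset.range (J + 1),
                Real.exp (-2 * (j : ℝ)) * ζ j ω) ^ 2)) ∂μ ≤ ENNReal.ofReal Cs := by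
  refine ⟨c / 4, (1 - c * B)⁻¹, by linarith, inv_pos.2 (by linarith), ?_⟩
  intro Ω mΩ μ hμ J ζ hmeas hpos hexp
  set w : ℕ → ℝ := fun j => Real.exp (-2 * (j : ℝ)) with hw
  have hwpos : ∀ j, 0 < w j := fun j => Real.exp_pos _
  set S : ℝ := ∑ j ∈ Finset.range (J + 1), w j with hS
  have hS1 : 1 ≤ S := by
    have h0 : w 0 = 1 := by simp [hw]
    calc (1 : ℝ) = w 0 := h0.symm
      _ ≤ S := Finset.single_le_sum (fun i _ => (hwpos i).le)
        (Finset.mem_range.2 (Nat.succ_pos J))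
  have hSpos : 0 < S := lt_of_lt_of_le one_pos hS1
  -- S ≤ 2
  have hr : Real.exp (-2) < 1 := by
    rw [Real.exp_lt_one_iff]; norm_num
  have hrhalf : Real.exp (-2) ≤ 1 / 2 := by
    have h2 : (2 : ℝ) ≤ Real.exp 2 := by
      have := Real.add_one_le_exp (2 : ℝ); linarith
    rw [Real.exp_neg]
    rw [inv_le_iff_one_le_mul₀ (Real.exp_pos 2)]
    nlinarith
  have hS2 : S ≤ 2 := by
    have hgeom : S = ∑ j ∈ Finset.range (J + 1), Real.exp (-2) ^ j := by
      refine Finset.sum_congr rfl fun j _ => ?_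
      show Real.exp (-2 * (j : ℝ)) = Real.exp (-2) ^ j
      rw [show (-2 : ℝ) * (j : ℝ) = (j : ℝ) * (-2) by ring, Real.exp_nat_mul]
    have hne : Real.exp (-2) ≠ 1 := ne_of_lt hr
    rw [hgeom, geom_sum_eq hne]
    have hpow : (0:ℝ) ≤ Real.exp (-2) ^ (J + 1) := by positivity
    have hd : Real.exp (-2) - 1 < 0 := by linarith
    rw [div_le_iff_of_neg hd]
    nlinarith
  set cs : ℝ := c / 4 with hcs
  set c' : ℝ := cs * S ^ 2 with hc'
  have hc'pos : 0 < c' := by positivity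
  have hc'le : c' ≤ c := by
    have : S ^ 2 ≤ 4 := by nlinarith
    calc c' = c / 4 * S ^ 2 := rfl
      _ ≤ c / 4 * 4 := by nlinarith
      _ = c := by ring
  -- pointwise bound
  have hpt : ∀ ω, Real.exp (cs * (∑ j ∈ Finset.range (J + 1), w j * ζ j ω) ^ 2)
      ≤ ∑ j ∈ Finset.range (J + 1), (w j / S) * Real.exp (c' * ζ j ω ^ 2) := by
    intro ω
    set Y : ℝ := ∑ j ∈ Finset.range (J + 1), w j * ζ j ω with hY
    have hcs2 : Y ^ 2 ≤ S * ∑ j ∈ Finset.range (J + 1), w j * ζ j ω ^ 2 := by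
      have := Finset.sum_mul_sq_le_sq_mul_sq (Finset.range (J + 1))
        (fun j => Real.sqrt (w j)) (fun j => Real.sqrt (w j) * ζ j ω)
      have h1 : ∀ j ∈ Finset.range (J + 1),
          Real.sqrt (w j) * (Real.sqrt (w j) * ζ j ω) = w j * ζ j ω := by
        intro j _
        rw [← mul_assoc, Real.mul_self_sqrt (hwpos j).le]
      have h2 : ∀ j ∈ Finset.range (J + 1),
          Real.sqrt (w j) ^ 2 = w j := fun j _ => Real.sq_sqrt (hwpos j).le
      have h3 : ∀ j ∈ Finset.range (J + 1),
          (Real.sqrt (w j) * ζ j ω) ^ 2 = w j * ζ j ω ^ 2 := by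
        intro j hj
        rw [mul_pow, Real.sq_sqrt (hwpos j).le]
      rw [Finset.sum_congr rfl h1, Finset.sum_congr rfl h2, Finset.sum_congr rfl h3] at this
      exact this
    have hkey : cs * Y ^ 2 ≤ ∑ j ∈ Finset.range (J + 1), (w j / S) * (c' * ζ j ω ^ 2) := by
      have : ∑ j ∈ Finset.range (J + 1), (w j / S) * (c' * ζ j ω ^ 2)
          = cs * S * ∑ j ∈ Finset.range (J + 1), w j * ζ j ω ^ 2 := by
        rw [Finset.mul_sum]
        refine Finset.sum_congr rfl fun j _ => ?_
        field_simp [hc']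
        ring
      rw [this]
      have hsum_nonneg : 0 ≤ ∑ j ∈ Finset.range (J + 1), w j * ζ j ω ^ 2 := by
        refine Finset.sum_nonneg fun j _ => ?_
        positivity
      calc cs * Y ^ 2 ≤ cs * (S * ∑ j ∈ Finset.range (J + 1), w j * ζ j ω ^ 2) := by
            have hcsp : 0 < cs := by rw [hcs]; linarith
            exact mul_le_mul_of_nonneg_left hcs2 hcsp.le
        _ = cs * S * ∑ j ∈ Finset.range (J + 1), w j * ζ j ω ^ 2 := by ring
    have hjensen : Real.exp (∑ j ∈ Finset.range (J + 1), (w j / S) * (c' * ζ j ω ^ 2))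
        ≤ ∑ j ∈ Finset.range (J + 1), (w j / S) * Real.exp (c' * ζ j ω ^ 2) := by
      have hw0 : ∀ j ∈ Finset.range (J + 1), 0 ≤ w j / S := fun j _ => by positivity
      have hw1 : ∑ j ∈ Finset.range (J + 1), w j / S = 1 := by
        rw [← Finset.sum_div, ← hS, div_self (ne_of_gt hSpos)]
      have := convexOn_exp.map_sum_le hw0 hw1
        (fun j _ => Set.mem_univ (c' * ζ j ω ^ 2))
      simpa [smul_eq_mul] using this
    exact le_trans (Real.exp_le_exp.2 hkey) hjensen
  -- integrate
  calc ∫⁻ ω, ENNReal.ofReal (Real.exp (cs * (∑ j ∈ Finset.range (J + 1), w j * ζ j ω) ^ 2)) ∂μ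
      ≤ ∫⁻ ω, ENNReal.ofReal (∑ j ∈ Finset.range (J + 1),
          (w j / S) * Real.exp (c' * ζ j ω ^ 2)) ∂μ := by
        exact lintegral_mono fun ω => ENNReal.ofReal_le_ofReal (hpt ω)
    _ = ∫⁻ ω, ∑ j ∈ Finset.range (J + 1),
          ENNReal.ofReal ((w j / S) * Real.exp (c' * ζ j ω ^ 2)) ∂μ := by
        refine lintegral_congr fun ω => ?_
        rw [ENNReal.ofReal_sum_of_nonneg]
        intro j _; positivity
    _ = ∑ j ∈ Finset.range (J + 1),
          ∫⁻ ω, ENNReal.ofReal ((w j / S) * Real.exp (c' * ζ j ω ^ 2)) ∂μ := by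
        refine lintegral_finset_sum _ fun j hj => ?_
        have hj' : j ≤ J := Nat.lt_succ_iff.1 (Finset.mem_range.1 hj)
        have hm : Measurable fun ω => (w j / S) * Real.exp (c' * ζ j ω ^ 2) :=
          (Real.measurable_exp.comp
            (measurable_const.mul ((hmeas j hj').pow_const 2))).const_mul _
        exact ENNReal.measurable_ofReal.comp hm
    _ ≤ ∑ j ∈ Finset.range (J + 1),
          ENNReal.ofReal (w j / S) * ENNReal.ofReal ((1 - c * B)⁻¹) := by
        refine Finset.sum_le_sum fun j hj => ?_
        have hj' : j ≤ J := Nat.lt_succ_iff.1 (Finset.mem_range.1 hj)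
        have hmj : Measurable fun ω => ENNReal.ofReal (Real.exp (c' * ζ j ω ^ 2)) :=
          ENNReal.measurable_ofReal.comp
            (Real.measurable_exp.comp (measurable_const.mul ((hmeas j hj').pow_const 2)))
        have heq : (fun ω => ENNReal.ofReal ((w j / S) * Real.exp (c' * ζ j ω ^ 2)))
            = fun ω => ENNReal.ofReal (w j / S) * ENNReal.ofReal (Real.exp (c' * ζ j ω ^ 2)) := by
          funext ω
          rw [ENNReal.ofReal_mul (by positivity)]
        rw [heq, lintegral_const_mul _ hmj]
        refine mul_le_mul_right ?_ _
        calc ∫⁻ ω, ENNReal.ofReal (Real.exp (c' * ζ j ω ^ 2)) ∂μ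
            ≤ ENNReal.ofReal ((1 - c' * B)⁻¹) := hexp j hj' c' hc'pos hc'le
          _ ≤ ENNReal.ofReal ((1 - c * B)⁻¹) := by
              refine ENNReal.ofReal_le_ofReal ?_
              have h1 : 0 < 1 - c * B := by linarith
              have h2 : 1 - c * B ≤ 1 - c' * B := by nlinarith
              exact one_div (1 - c' * B) ▸ one_div (1 - c * B) ▸
                one_div_le_one_div_of_le h1 h2
    _ = ENNReal.ofReal ((1 - c * B)⁻¹) := by
        rw [← Finset.sum_mul, ← ENNReal.ofReal_sum_of_nonneg (fun j _ => by positivity),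
          ← Finset.sum_div, ← hS, div_self (ne_of_gt hSpos)]
        simp
end

section
/- Let (Ω, F, P) be a probability space and X : Ω × [0,∞) → [0,∞) a jointly measurable nonnegative process; set S_t(ω) = ∫₀ᵗ X(ω,s) ds. Suppose there are constants λ > 0, C > 0, c₁ ≥ 0, c₂ > 0 such that E[exp(λ S_n)] ≤ C exp(c₁ + c₂ n) for every integer n ≥ 1. Set K = λ^{−1}(c₂ + 1). Then for every ρ ∈ ℝ, P{ sup_{t ≥ 0} ( S_t − K t ) ≥ ρ } ≤ C' exp(c₁ − λρ), where C' = C e^{λK}/(e − 1). -/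
open MeasureTheory ENNReal

lemma aux_strict
    {Ω : Type*} {mΩ : MeasurableSpace Ω} (μ : Measure Ω) [IsProbabilityMeasure μ]
    (X : Ω → ℝ → NNReal) (hX : Measurable (Function.uncurry X))
    (S : ℝ → Ω → ℝ≥0∞)
    (hS : ∀ t ω, S t ω = ∫⁻ s in Set.Ioc (0 : ℝ) t, (X ω s : ℝ≥0∞))
    (lam C c₁ c₂ : ℝ) (hlam : 0 < lam) (hC : 0 < C) (hc₁ : 0 ≤ c₁) (hc₂ : 0 < c₂)
    (hmom : ∀ n : ℕ, 1 ≤ n →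
      ∫⁻ ω, (if S (n : ℝ) ω = ⊤ then ⊤
             else ENNReal.ofReal (Real.exp (lam * (S (n : ℝ) ω).toReal))) ∂μ ≤
        ENNReal.ofReal (C * Real.exp (c₁ + c₂ * n)))
    (K : ℝ) (hK : K = lam⁻¹ * (c₂ + 1)) (r : ℝ) :
    μ {ω | ENNReal.ofReal r <
        ⨆ (t : ℝ) (_ : 0 ≤ t), (S t ω - ENNReal.ofReal (K * t))} ≤
      ENNReal.ofReal (C * Real.exp (lam * K) / (Real.exp 1 - 1) *
        Real.exp (c₁ - lam * r)) := by
  have hlK : lam * K = c₂ + 1 := by rw [hK]; field_simp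
  have hK0 : 0 < K := by
    rw [hK]; positivity
  -- measurability of S t
  have hSmeas : ∀ t : ℝ, Measurable (S t) := by
    intro t
    have : (fun ω => ∫⁻ s in Set.Ioc (0:ℝ) t, (X ω s : ℝ≥0∞)) = S t := by
      ext ω; rw [hS]
    rw [← this]
    exact Measurable.lintegral_prod_right'
      (f := fun p : Ω × ℝ => ((X p.1 p.2 : ℝ≥0∞)))
      ((measurable_coe_nnreal_ennreal.comp hX))
  -- monotonicity of S
  have hSmono : ∀ (ω : Ω) {t u : ℝ}, t ≤ u → S t ω ≤ S u ω := by
    intro ω t u htu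
    rw [hS, hS]
    exact lintegral_mono_set (Set.Ioc_subset_Ioc_right htu)
  -- the events
  set A : ℕ → Set Ω := fun n => {ω | ENNReal.ofReal (r + K * n) ≤ S ((n:ℝ)+1) ω} with hA
  -- inclusion
  have hincl : {ω | ENNReal.ofReal r <
      ⨆ (t : ℝ) (_ : 0 ≤ t), (S t ω - ENNReal.ofReal (K * t))} ⊆ ⋃ n, A n := by
    intro ω hω
    simp only [Set.mem_setOf_eq, lt_iSup_iff] at hω
    obtain ⟨t, ht0, hlt⟩ := hω
    refine Set.mem_iUnion.2 ⟨⌊t⌋₊, ?_⟩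
    have hfl : (⌊t⌋₊ : ℝ) ≤ t := Nat.floor_le ht0
    have hfu : t ≤ (⌊t⌋₊ : ℝ) + 1 := (Nat.lt_floor_add_one t).le
    have hle : S t ω - ENNReal.ofReal (K * t) ≤
        S ((⌊t⌋₊ : ℝ)+1) ω - ENNReal.ofReal (K * ⌊t⌋₊) := by
      refine tsub_le_tsub (hSmono ω hfu) (ENNReal.ofReal_le_ofReal ?_)
      exact mul_le_mul_of_nonneg_left hfl hK0.le
    have hlt2 : ENNReal.ofReal r < S ((⌊t⌋₊ : ℝ)+1) ω - ENNReal.ofReal (K * ⌊t⌋₊) :=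
      lt_of_lt_of_le hlt hle
    have := lt_tsub_iff_right.mp hlt2
    refine le_trans (ENNReal.ofReal_add_le) this.le
  -- Markov bound on each A n
  have hmarkov : ∀ n : ℕ, μ (A n) ≤
      ENNReal.ofReal ((C * Real.exp (lam * K) * Real.exp (c₁ - lam * r)) *
        Real.exp (-1) ^ (n+1)) := by
    intro n
    set a : ℝ := r + K * n with ha
    set g : Ω → ℝ≥0∞ := fun ω =>
      if S ((n:ℝ)+1) ω = ⊤ then ⊤
      else ENNReal.ofReal (Real.exp (lam * (S ((n:ℝ)+1) ω).toReal)) with hg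
    have hgmeas : Measurable g := by
      apply Measurable.ite ((hSmeas ((n:ℝ)+1)) (measurableSet_singleton ⊤)) measurable_const
      exact ENNReal.measurable_ofReal.comp
        (Real.measurable_exp.comp (measurable_const.mul
          (ENNReal.measurable_toReal.comp (hSmeas ((n:ℝ)+1)))))
    have hsub : A n ⊆ {ω | ENNReal.ofReal (Real.exp (lam * a)) ≤ g ω} := by
      intro ω hω
      simp only [hA, Set.mem_setOf_eq] at hω ⊢
      rw [hg]
      by_cases hT : S ((n:ℝ)+1) ω = ⊤
      · simp [hT]
      · simp only [hT, if_false]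
        refine ENNReal.ofReal_le_ofReal (Real.exp_le_exp.2 ?_)
        have := (ENNReal.ofReal_le_iff_le_toReal hT).mp hω
        exact mul_le_mul_of_nonneg_left this hlam.le
    have hcheb : ENNReal.ofReal (Real.exp (lam * a)) * μ (A n) ≤
        ENNReal.ofReal (C * Real.exp (c₁ + c₂ * (n+1))) := by
      calc ENNReal.ofReal (Real.exp (lam * a)) * μ (A n)
          ≤ ENNReal.ofReal (Real.exp (lam * a)) *
            μ {ω | ENNReal.ofReal (Real.exp (lam * a)) ≤ g ω} := by
            exact mul_le_mul_right (measure_mono hsub) _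
        _ ≤ ∫⁻ ω, g ω ∂μ := mul_meas_ge_le_lintegral₀ hgmeas.aemeasurable _
        _ ≤ ENNReal.ofReal (C * Real.exp (c₁ + c₂ * (n+1))) := by
            have := hmom (n+1) (Nat.le_add_left 1 n)
            simpa [Nat.cast_add, Nat.cast_one] using this
    have hεpos : (0:ℝ) < Real.exp (lam * a) := Real.exp_pos _
    have hεne : ENNReal.ofReal (Real.exp (lam * a)) ≠ 0 := by
      simp [ENNReal.ofReal_eq_zero, not_le, hεpos]
    have hεtop : ENNReal.ofReal (Real.exp (lam * a)) ≠ ⊤ := ENNReal.ofReal_ne_top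
    have h1 : μ (A n) ≤
        ENNReal.ofReal (C * Real.exp (c₁ + c₂ * (n+1))) / ENNReal.ofReal (Real.exp (lam * a)) := by
      rw [ENNReal.le_div_iff_mul_le (Or.inl hεne) (Or.inl hεtop), mul_comm]
      exact hcheb
    refine le_trans h1 (le_of_eq ?_)
    rw [← ENNReal.ofReal_div_of_pos hεpos]
    congr 1
    rw [div_eq_mul_inv, ← Real.exp_neg]
    have hpow : (Real.exp (-1)) ^ (n+1) = Real.exp (-((n:ℝ)+1)) := by
      rw [← Real.exp_nat_mul]
      push_cast
      ring_nf
    rw [hpow, mul_assoc, ← Real.exp_add, mul_assoc, mul_assoc, ← Real.exp_add,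
      ← Real.exp_add]
    congr 2
    rw [ha]
    nlinarith [hlK]
  -- sum up
  calc μ {ω | ENNReal.ofReal r <
        ⨆ (t : ℝ) (_ : 0 ≤ t), (S t ω - ENNReal.ofReal (K * t))}
      ≤ μ (⋃ n, A n) := measure_mono hincl
    _ ≤ ∑' n, μ (A n) := measure_iUnion_le A
    _ ≤ ∑' n, ENNReal.ofReal ((C * Real.exp (lam * K) * Real.exp (c₁ - lam * r)) *
        Real.exp (-1) ^ (n+1)) := ENNReal.tsum_le_tsum hmarkov
    _ = ENNReal.ofReal (C * Real.exp (lam * K) / (Real.exp 1 - 1) *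
        Real.exp (c₁ - lam * r)) := by
        have hq0 : (0:ℝ) ≤ Real.exp (-1) := (Real.exp_pos _).le
        have hq1 : Real.exp (-1) < 1 := by
          rw [Real.exp_lt_one_iff]; norm_num
        have hsummable : Summable (fun n : ℕ =>
            (C * Real.exp (lam * K) * Real.exp (c₁ - lam * r)) * Real.exp (-1) ^ (n+1)) := by
          apply Summable.mul_left
          exact (summable_geometric_of_lt_one hq0 hq1).comp_injective (add_left_injective 1)
        rw [← ENNReal.ofReal_tsum_of_nonneg]
        · congr 1
          rw [tsum_mul_left]
          have : ∑' n : ℕ, Real.exp (-1) ^ (n+1) =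
              Real.exp (-1) * (1 - Real.exp (-1))⁻¹ := by
            simp_rw [pow_succ, mul_comm]
            rw [tsum_mul_left, tsum_geometric_of_lt_one hq0 hq1]
          rw [this]
          have he1 : (1:ℝ) < Real.exp 1 := by
            have := Real.add_one_lt_exp (x := 1) (by norm_num); linarith
          have hene : Real.exp 1 - 1 ≠ 0 := by linarith
          have hexpne : Real.exp 1 ≠ 0 := (Real.exp_pos 1).ne'
          field_simp [Real.exp_neg]
          have hm : Real.exp (-1) * Real.exp 1 = 1 := by rw [← Real.exp_add]; norm_num
          rw [div_eq_one_iff_eq (sub_pos.2 hq1).ne']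
          linear_combination hm
        · intro n
          positivity
        · exact hsummable

/-- Tail estimate for the supremum of `S_t − Kt` (Lemma 2.4): if
`S_t(ω) = ∫₀ᵗ X(ω,s) ds` for a jointly measurable nonnegative process `X` and
`E[exp(λ S_n)] ≤ C exp(c₁ + c₂ n)` for all integers `n ≥ 1`, then with
`K = λ⁻¹(c₂ + 1)` one has, for every `ρ`,
`P{ sup_{t ≥ 0} (S_t − Kt) ≥ ρ } ≤ (C e^{λK}/(e − 1)) exp(c₁ − λρ)`. -/
theorem tail_estimate_sup_integral_minus_linear
    {Ω : Type*} {mΩ : MeasurableSpace Ω} (μ : Measure Ω) [IsProbabilityMeasure μ]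
    (X : Ω → ℝ → NNReal) (hX : Measurable (Function.uncurry X))
    (S : ℝ → Ω → ℝ≥0∞)
    (hS : ∀ t ω, S t ω = ∫⁻ s in Set.Ioc (0 : ℝ) t, (X ω s : ℝ≥0∞))
    (lam C c₁ c₂ : ℝ) (hlam : 0 < lam) (hC : 0 < C) (hc₁ : 0 ≤ c₁) (hc₂ : 0 < c₂)
    (hmom : ∀ n : ℕ, 1 ≤ n →
      ∫⁻ ω, (if S (n : ℝ) ω = ⊤ then ⊤
             else ENNReal.ofReal (Real.exp (lam * (S (n : ℝ) ω).toReal))) ∂μ ≤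
        ENNReal.ofReal (C * Real.exp (c₁ + c₂ * n)))
    (K : ℝ) (hK : K = lam⁻¹ * (c₂ + 1)) (ρ : ℝ) :
    μ {ω | ENNReal.ofReal ρ ≤
        ⨆ (t : ℝ) (_ : 0 ≤ t), (S t ω - ENNReal.ofReal (K * t))} ≤
      ENNReal.ofReal (C * Real.exp (lam * K) / (Real.exp 1 - 1) *
        Real.exp (c₁ - lam * ρ)) := by
  have hlK : lam * K = c₂ + 1 := by rw [hK]; field_simp
  have he1 : (1:ℝ) < Real.exp 1 := by
    have := Real.add_one_lt_exp (x := 1) (by norm_num); linarith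
  rcases le_or_gt ρ 0 with hρ | hρ
  · -- ρ ≤ 0 : bound measure by 1 and show 1 ≤ RHS
    -- from hmom at n = 1: 1 ≤ C exp(c₁+c₂)
    have hone : (1:ℝ≥0∞) ≤ ENNReal.ofReal (C * Real.exp (c₁ + c₂ * (1:ℕ))) := by
      refine le_trans ?_ (hmom 1 le_rfl)
      have : ∀ ω, (1:ℝ≥0∞) ≤ (if S ((1:ℕ):ℝ) ω = ⊤ then ⊤
          else ENNReal.ofReal (Real.exp (lam * (S ((1:ℕ):ℝ) ω).toReal))) := by
        intro ω
        by_cases hT : S ((1:ℕ):ℝ) ω = ⊤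
        · rw [if_pos hT]; exact le_top
        · rw [if_neg hT]
          rw [ENNReal.one_le_ofReal]
          have : (0:ℝ) ≤ lam * (S ((1:ℕ):ℝ) ω).toReal :=
            mul_nonneg hlam.le ENNReal.toReal_nonneg
          calc (1:ℝ) = Real.exp 0 := Real.exp_zero.symm
            _ ≤ _ := Real.exp_le_exp.2 this
      calc (1:ℝ≥0∞) = ∫⁻ _, 1 ∂μ := by simp
        _ ≤ _ := lintegral_mono this
    rw [ENNReal.one_le_ofReal] at hone
    have hRHS : (1:ℝ) ≤ C * Real.exp (lam * K) / (Real.exp 1 - 1) *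
        Real.exp (c₁ - lam * ρ) := by
      have heq : C * Real.exp (lam * K) / (Real.exp 1 - 1) * Real.exp (c₁ - lam * ρ) =
          (C * Real.exp (c₁ + c₂ * (1:ℕ))) * (Real.exp (1 - lam * ρ) / (Real.exp 1 - 1)) := by
        have hprod : Real.exp (lam * K) * Real.exp (c₁ - lam * ρ) =
            Real.exp (c₁ + c₂ * ((1:ℕ):ℝ)) * Real.exp (1 - lam * ρ) := by
          rw [← Real.exp_add, ← Real.exp_add]
          congr 1
          push_cast
          linarith
        rw [div_mul_eq_mul_div, mul_assoc, hprod]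
        ring
      rw [heq]
      have h1 : Real.exp 1 - 1 ≤ Real.exp (1 - lam * ρ) := by
        have : Real.exp 1 ≤ Real.exp (1 - lam * ρ) := by
          apply Real.exp_le_exp.2; nlinarith
        linarith
      have hB : (1:ℝ) ≤ Real.exp (1 - lam * ρ) / (Real.exp 1 - 1) := by
        rw [le_div_iff₀ (by linarith)]
        linarith
      have hAB := mul_le_mul hone hB zero_le_one (by positivity)
      linarith [hAB]
    calc μ _ ≤ 1 := prob_le_one
      _ ≤ _ := ENNReal.one_le_ofReal.2 hRHS
  · -- ρ > 0 : approximate from below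
    have hbound : ∀ k : ℕ, μ {ω | ENNReal.ofReal ρ ≤
        ⨆ (t : ℝ) (_ : 0 ≤ t), (S t ω - ENNReal.ofReal (K * t))} ≤
        ENNReal.ofReal (C * Real.exp (lam * K) / (Real.exp 1 - 1) *
          Real.exp (c₁ - lam * (ρ - 1/(k+1)))) := by
      intro k
      refine le_trans (measure_mono ?_)
        (aux_strict μ X hX S hS lam C c₁ c₂ hlam hC hc₁ hc₂ hmom K hK (ρ - 1/(k+1)))
      intro ω hω
      simp only [Set.mem_setOf_eq] at hω ⊢
      refine lt_of_lt_of_le ?_ hω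
      rw [ENNReal.ofReal_lt_ofReal_iff hρ]
      have : (0:ℝ) < 1/((k:ℝ)+1) := by positivity
      linarith
    have htend : Filter.Tendsto (fun k : ℕ =>
        ENNReal.ofReal (C * Real.exp (lam * K) / (Real.exp 1 - 1) *
          Real.exp (c₁ - lam * (ρ - 1/(k+1))))) Filter.atTop
        (nhds (ENNReal.ofReal (C * Real.exp (lam * K) / (Real.exp 1 - 1) *
          Real.exp (c₁ - lam * ρ)))) := by
      apply ENNReal.continuous_ofReal.continuousAt.tendsto.comp
      have h0 : Filter.Tendsto (fun k : ℕ => 1/((k:ℝ)+1)) Filter.atTop (nhds 0) :=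
        tendsto_one_div_add_atTop_nhds_zero_nat
      have : Filter.Tendsto (fun k : ℕ => c₁ - lam * (ρ - 1/(k+1))) Filter.atTop
          (nhds (c₁ - lam * ρ)) := by
        have := ((h0.const_mul lam).const_sub ρ).const_mul lam
        have := (((h0.const_mul lam)).neg.const_add (lam * ρ))
        -- build directly
        have h1 : Filter.Tendsto (fun k : ℕ => ρ - 1/((k:ℝ)+1)) Filter.atTop (nhds (ρ - 0)) :=
          tendsto_const_nhds.sub h0
        have h2 := (h1.const_mul lam).const_sub c₁
        simpa using h2
      exact (Real.continuous_exp.continuousAt.tendsto.comp this).const_mul _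
    exact ge_of_tendsto htend (Filter.Eventually.of_forall hbound)
end

section
/- Let X be a separable Banach space over ℝ and let μ₁, μ₂ be Borel probability measures on X such that ∫_X e^{c‖x‖} μ_i(dx) ≤ M for i = 1,2, for some constants c > 0 and M ≥ 1. Let d = ‖μ₁ − μ₂‖*_L be their dual-Lipschitz distance. Then there exists a constant C = C(c, M) > 0 such that for every 1-Lipschitz function f : X → ℝ with f(0) = 0 one has |∫_X f dμ₁ − ∫_X f dμ₂| ≤ C √d. -/
open MeasureTheory

lemma exp_moment_integrable {X : Type} [NormedAddCommGroup X] [MeasurableSpace X]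
    [OpensMeasurableSpace X] {c M : ℝ} (μ : Measure X)
    (h : ∫⁻ x, ENNReal.ofReal (Real.exp (c * ‖x‖)) ∂μ ≤ ENNReal.ofReal M) :
    Integrable (fun x => Real.exp (c * ‖x‖)) μ := by
  have hcont : Continuous fun x : X => Real.exp (c * ‖x‖) :=
    Real.continuous_exp.comp (continuous_const.mul continuous_norm)
  refine ⟨hcont.aestronglyMeasurable, ?_⟩
  rw [hasFiniteIntegral_iff_norm]
  calc ∫⁻ x, ENNReal.ofReal ‖Real.exp (c * ‖x‖)‖ ∂μ
      = ∫⁻ x, ENNReal.ofReal (Real.exp (c * ‖x‖)) ∂μ :=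
        lintegral_congr fun x => by rw [Real.norm_eq_abs, abs_of_pos (Real.exp_pos _)]
    _ ≤ ENNReal.ofReal M := h
    _ < ⊤ := ENNReal.ofReal_lt_top

lemma exp_moment_integral_le {X : Type} [NormedAddCommGroup X] [MeasurableSpace X]
    [OpensMeasurableSpace X] {c M : ℝ} (hM : 0 ≤ M) (μ : Measure X)
    (h : ∫⁻ x, ENNReal.ofReal (Real.exp (c * ‖x‖)) ∂μ ≤ ENNReal.ofReal M) :
    ∫ x, Real.exp (c * ‖x‖) ∂μ ≤ M := by
  have hcont : Continuous fun x : X => Real.exp (c * ‖x‖) :=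
    Real.continuous_exp.comp (continuous_const.mul continuous_norm)
  rw [integral_eq_lintegral_of_nonneg_ae
      (Filter.Eventually.of_forall fun x => (Real.exp_pos _).le) hcont.aestronglyMeasurable]
  exact ENNReal.toReal_le_of_le_ofReal hM h

/-- Estimate of the Kantorovich distance by the dual-Lipschitz distance (Section 4.2):
if two Borel probability measures on a separable Banach space `X` have exponential
moments `∫ e^{c‖x‖} dμᵢ ≤ M`, and `d` is their dual-Lipschitz distance, then there is a
constant `C = C(c, M) > 0` such that `|∫ f dμ₁ − ∫ f dμ₂| ≤ C √d` for every
`1`-Lipschitz `f : X → ℝ` with `f 0 = 0`. -/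
theorem kantorovich_le_sqrt_dual_lipschitz (c M : ℝ) (hc : 0 < c) (hM : 1 ≤ M) :
    ∃ C : ℝ, 0 < C ∧
      ∀ (X : Type) [NormedAddCommGroup X] [NormedSpace ℝ X] [MeasurableSpace X]
        [BorelSpace X] [TopologicalSpace.SeparableSpace X]
        (μ₁ μ₂ : Measure X) [IsProbabilityMeasure μ₁] [IsProbabilityMeasure μ₂],
        (∫⁻ x, ENNReal.ofReal (Real.exp (c * ‖x‖)) ∂μ₁ ≤ ENNReal.ofReal M) →
        (∫⁻ x, ENNReal.ofReal (Real.exp (c * ‖x‖)) ∂μ₂ ≤ ENNReal.ofReal M) →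
        ∀ d : ℝ,
          d = sSup {r : ℝ | ∃ f : X → ℝ, ∃ a b : NNReal, (a : ℝ) + (b : ℝ) ≤ 1 ∧
                (∀ x, |f x| ≤ a) ∧ LipschitzWith b f ∧
                r = |(∫ x, f x ∂μ₁) - ∫ x, f x ∂μ₂|} →
          ∀ f : X → ℝ, LipschitzWith 1 f → f 0 = 0 →
            |(∫ x, f x ∂μ₁) - ∫ x, f x ∂μ₂| ≤ C * Real.sqrt d := by
  have hM0 : (0:ℝ) ≤ M := le_trans zero_le_one hM
  refine ⟨1/c + 2 + 2*M/c, by positivity, ?_⟩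
  intro X _ _ _ _ _ μ₁ μ₂ _ _ hm1 hm2 d hd f hf hf0
  set S : Set ℝ := {r : ℝ | ∃ f : X → ℝ, ∃ a b : NNReal, (a : ℝ) + (b : ℝ) ≤ 1 ∧
      (∀ x, |f x| ≤ a) ∧ LipschitzWith b f ∧
      r = |(∫ x, f x ∂μ₁) - ∫ x, f x ∂μ₂|} with hS
  have hzero : (0:ℝ) ∈ S := by
    refine ⟨fun _ => 0, 0, 0, by norm_num, fun x => by simp, LipschitzWith.const 0, by simp⟩
  have hbdd : ∀ r ∈ S, r ≤ 2 := by
    rintro r ⟨g, a, b, hab, hga, -, rfl⟩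
    have ha1 : (a:ℝ) ≤ 1 := le_trans (le_add_of_nonneg_right b.coe_nonneg) hab
    have h1 : |∫ x, g x ∂μ₁| ≤ (a:ℝ) := by
      have h := norm_integral_le_of_norm_le_const (μ := μ₁) (f := g) (C := (a:ℝ))
        (Filter.Eventually.of_forall fun x => by simpa [Real.norm_eq_abs] using hga x)
      rw [probReal_univ, mul_one, Real.norm_eq_abs] at h
      exact h
    have h2 : |∫ x, g x ∂μ₂| ≤ (a:ℝ) := by
      have h := norm_integral_le_of_norm_le_const (μ := μ₂) (f := g) (C := (a:ℝ))
        (Filter.Eventually.of_forall fun x => by simpa [Real.norm_eq_abs] using hga x)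
      rw [probReal_univ, mul_one, Real.norm_eq_abs] at h
      exact h
    calc |(∫ x, g x ∂μ₁) - ∫ x, g x ∂μ₂| ≤ |∫ x, g x ∂μ₁| + |∫ x, g x ∂μ₂| := abs_sub _ _
      _ ≤ 2 := by linarith
  have hbddAbove : BddAbove S := ⟨2, hbdd⟩
  have hd0 : 0 ≤ d := hd ▸ le_csSup hbddAbove hzero
  have hd2 : d ≤ 2 := hd ▸ csSup_le ⟨0, hzero⟩ hbdd
  -- basic bounds on f
  have hfabs : ∀ x : X, |f x| ≤ ‖x‖ := by
    intro x
    have := hf.dist_le_mul x 0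
    simpa [Real.dist_eq, hf0] using this
  have hnorm_le_exp : ∀ x : X, ‖x‖ ≤ (1/c) * Real.exp (c * ‖x‖) := by
    intro x
    have h1 : c * ‖x‖ ≤ Real.exp (c * ‖x‖) :=
      le_trans (by linarith) (Real.add_one_le_exp (c * ‖x‖))
    rw [div_mul_eq_mul_div, le_div_iff₀ hc, one_mul, mul_comm]
    exact h1
  have hexpint1 := exp_moment_integrable μ₁ hm1
  have hexpint2 := exp_moment_integrable μ₂ hm2
  have hexple1 := exp_moment_integral_le hM0 μ₁ hm1
  have hexple2 := exp_moment_integral_le hM0 μ₂ hm2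
  have hfcont : Continuous f := hf.continuous
  have hfint : ∀ (μ : Measure X), Integrable (fun x => Real.exp (c * ‖x‖)) μ →
      Integrable f μ := by
    intro μ hint
    refine Integrable.mono' (hint.const_mul (1/c)) hfcont.aestronglyMeasurable
      (Filter.Eventually.of_forall fun x => ?_)
    rw [Real.norm_eq_abs]
    exact le_trans (hfabs x) (hnorm_le_exp x)
  have hfint1 : Integrable f μ₁ := hfint μ₁ hexpint1
  have hfint2 : Integrable f μ₂ := hfint μ₂ hexpint2
  -- the key truncation estimate
  have key : ∀ R : ℝ, 0 ≤ R →
      |(∫ x, f x ∂μ₁) - ∫ x, f x ∂μ₂| ≤ (R+1)*d + (2*M/c)*Real.exp (-(c*R)) := by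
    intro R hR
    set g : X → ℝ := fun x => max (min (f x) R) (-R) with hg
    have hg_lip : LipschitzWith 1 g := (hf.min_const R).max_const (-R)
    have hg_bd : ∀ x, |g x| ≤ R := by
      intro x
      rw [abs_le]
      constructor
      · exact le_max_right _ _
      · exact max_le (le_trans (min_le_right _ _) le_rfl) (by linarith)
    have hg_cont : Continuous g := hg_lip.continuous
    have hg_int1 : Integrable g μ₁ :=
      Integrable.mono' (integrable_const R) hg_cont.aestronglyMeasurable
        (Filter.Eventually.of_forall fun x => by rw [Real.norm_eq_abs]; exact hg_bd x)
    have hg_int2 : Integrable g μ₂ :=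
      Integrable.mono' (integrable_const R) hg_cont.aestronglyMeasurable
        (Filter.Eventually.of_forall fun x => by rw [Real.norm_eq_abs]; exact hg_bd x)
    -- pointwise tail bound
    have tail : ∀ x : X, |f x - g x| ≤ (1/c) * Real.exp (-(c*R)) * Real.exp (c * ‖x‖) := by
      intro x
      have h1 : |f x - g x| ≤ max (|f x| - R) 0 := by
        rw [abs_le]
        constructor
        · have hglb : -R ≤ g x := le_max_right _ _
          have hgub : g x ≤ max (f x) (-R) := max_le_max (min_le_left _ _) le_rfl
          rcases le_total (-R) (f x) with h | h
          · rw [max_eq_left h] at hgub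
            linarith [le_max_right (|f x| - R) (0:ℝ)]
          · rw [max_eq_right h] at hgub
            linarith [neg_abs_le (f x), le_max_left (|f x| - R) (0:ℝ)]
        · have hge : min (f x) R ≤ g x := le_max_left _ _
          rcases le_total (f x) R with h | h
          · rw [min_eq_left h] at hge
            linarith [le_max_right (|f x| - R) (0:ℝ)]
          · rw [min_eq_right h] at hge
            linarith [le_abs_self (f x), le_max_left (|f x| - R) (0:ℝ)]
      have h2 : max (|f x| - R) 0 ≤ (1/c) * Real.exp (c * (‖x‖ - R)) := by
        rcases le_total (‖x‖ - R) 0 with h | h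
        · have : max (|f x| - R) 0 = 0 ∨ max (|f x| - R) 0 = |f x| - R := by
            rcases max_cases (|f x| - R) 0 with ⟨h', _⟩ | ⟨h', _⟩
            · right; exact h'
            · left; exact h'
          have hpos : (0:ℝ) ≤ (1/c) * Real.exp (c * (‖x‖ - R)) := by positivity
          rcases this with h' | h'
          · rw [h']; exact hpos
          · rw [h']
            have := hfabs x
            nlinarith
        · have h3 : c * (‖x‖ - R) ≤ Real.exp (c * (‖x‖ - R)) :=
            le_trans (by linarith) (Real.add_one_le_exp _)
          have h4 : ‖x‖ - R ≤ (1/c) * Real.exp (c * (‖x‖ - R)) := by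
            rw [div_mul_eq_mul_div, le_div_iff₀ hc, one_mul, mul_comm]
            exact h3
          refine max_le (le_trans ?_ h4) (le_trans ?_ h4)
          · linarith [hfabs x]
          · linarith
      have h3 : Real.exp (c * (‖x‖ - R)) = Real.exp (-(c*R)) * Real.exp (c * ‖x‖) := by
        rw [← Real.exp_add]; ring_nf
      calc |f x - g x| ≤ (1/c) * Real.exp (c * (‖x‖ - R)) := le_trans h1 h2
        _ = (1/c) * Real.exp (-(c*R)) * Real.exp (c * ‖x‖) := by rw [h3]; ring
    -- integral tail bound for each measure
    have tail_int : ∀ (μ : Measure X), Integrable f μ → Integrable g μ →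
        Integrable (fun x => Real.exp (c * ‖x‖)) μ →
        (∫ x, Real.exp (c * ‖x‖) ∂μ ≤ M) →
        |(∫ x, f x ∂μ) - ∫ x, g x ∂μ| ≤ (M/c) * Real.exp (-(c*R)) := by
      intro μ hfi hgi hei hel
      rw [← integral_sub hfi hgi]
      have h1 : |∫ x, (f x - g x) ∂μ| ≤ ∫ x, |f x - g x| ∂μ := by
        simpa [Real.norm_eq_abs] using norm_integral_le_integral_norm (μ := μ) (f := fun x => f x - g x)
      have h2 : ∫ x, |f x - g x| ∂μ ≤ ∫ x, (1/c) * Real.exp (-(c*R)) * Real.exp (c * ‖x‖) ∂μ := by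
        refine integral_mono_of_nonneg (Filter.Eventually.of_forall fun x => abs_nonneg _)
          ((hei.const_mul _)) (Filter.Eventually.of_forall fun x => tail x)
      have h3 : ∫ x, (1/c) * Real.exp (-(c*R)) * Real.exp (c * ‖x‖) ∂μ
          = (1/c) * Real.exp (-(c*R)) * ∫ x, Real.exp (c * ‖x‖) ∂μ := by
        rw [integral_const_mul]
      have h4 : (1/c) * Real.exp (-(c*R)) * ∫ x, Real.exp (c * ‖x‖) ∂μ
          ≤ (1/c) * Real.exp (-(c*R)) * M := by
        apply mul_le_mul_of_nonneg_left hel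
        positivity
      calc |∫ x, (f x - g x) ∂μ| ≤ ∫ x, |f x - g x| ∂μ := h1
        _ ≤ (1/c) * Real.exp (-(c*R)) * M := by rw [← h3] at h4; linarith
        _ = (M/c) * Real.exp (-(c*R)) := by ring
    have tail1 := tail_int μ₁ hfint1 hg_int1 hexpint1 hexple1
    have tail2 := tail_int μ₂ hfint2 hg_int2 hexpint2 hexple2
    -- membership of scaled truncation
    have hR1 : (0:ℝ) < R + 1 := by linarith
    set g' : X → ℝ := fun x => g x / (R+1) with hg'
    have hmem : |(∫ x, g' x ∂μ₁) - ∫ x, g' x ∂μ₂| ∈ S := by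
      refine ⟨g', Real.toNNReal (R/(R+1)), Real.toNNReal (1/(R+1)), ?_, ?_, ?_, rfl⟩
      · rw [Real.coe_toNNReal _ (by positivity), Real.coe_toNNReal _ (by positivity)]
        rw [← add_div, div_self (ne_of_gt hR1)]
      · intro x
        rw [Real.coe_toNNReal _ (by positivity), hg']
        simp only
        rw [abs_div, abs_of_pos hR1]
        gcongr
        exact hg_bd x
      · apply LipschitzWith.of_dist_le_mul
        intro x y
        rw [Real.coe_toNNReal _ (by positivity)]
        have hgl : dist (g x) (g y) ≤ dist x y := by
          simpa using hg_lip.dist_le_mul x y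
        rw [Real.dist_eq, hg']
        simp only
        rw [div_sub_div_same, abs_div, abs_of_pos hR1, div_le_iff₀ hR1]
        calc |g x - g y| = dist (g x) (g y) := (Real.dist_eq _ _).symm
          _ ≤ dist x y := hgl
          _ = 1/(R+1) * dist x y * (R+1) := by field_simp
    have hr_le : |(∫ x, g' x ∂μ₁) - ∫ x, g' x ∂μ₂| ≤ d := hd ▸ le_csSup hbddAbove hmem
    have hgdiff : |(∫ x, g x ∂μ₁) - ∫ x, g x ∂μ₂| ≤ (R+1) * d := by
      have h1 : ∫ x, g' x ∂μ₁ = (∫ x, g x ∂μ₁) / (R+1) := integral_div _ _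
      have h2 : ∫ x, g' x ∂μ₂ = (∫ x, g x ∂μ₂) / (R+1) := integral_div _ _
      have h3 : |(∫ x, g' x ∂μ₁) - ∫ x, g' x ∂μ₂|
          = |(∫ x, g x ∂μ₁) - ∫ x, g x ∂μ₂| / (R+1) := by
        rw [h1, h2, div_sub_div_same, abs_div, abs_of_pos hR1]
      rw [h3, div_le_iff₀ hR1] at hr_le
      linarith [hr_le]
    calc |(∫ x, f x ∂μ₁) - ∫ x, f x ∂μ₂|
        ≤ |(∫ x, f x ∂μ₁) - ∫ x, g x ∂μ₁| + |(∫ x, g x ∂μ₁) - ∫ x, f x ∂μ₂| :=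
          abs_sub_le _ _ _
      _ ≤ |(∫ x, f x ∂μ₁) - ∫ x, g x ∂μ₁| + (|(∫ x, g x ∂μ₁) - ∫ x, g x ∂μ₂|
          + |(∫ x, g x ∂μ₂) - ∫ x, f x ∂μ₂|) := by
          have := abs_sub_le (∫ x, g x ∂μ₁) (∫ x, g x ∂μ₂) (∫ x, f x ∂μ₂)
          linarith
      _ = |(∫ x, f x ∂μ₁) - ∫ x, g x ∂μ₁| + |(∫ x, g x ∂μ₁) - ∫ x, g x ∂μ₂|
          + |(∫ x, g x ∂μ₂) - ∫ x, f x ∂μ₂| := by ring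
      _ ≤ (M/c) * Real.exp (-(c*R)) + (R+1)*d + (M/c) * Real.exp (-(c*R)) := by
          have : |(∫ x, g x ∂μ₂) - ∫ x, f x ∂μ₂| = |(∫ x, f x ∂μ₂) - ∫ x, g x ∂μ₂| :=
            abs_sub_comm _ _
          rw [this]; gcongr
      _ = (R+1)*d + (2*M/c)*Real.exp (-(c*R)) := by ring
  -- conclusion
  rcases eq_or_lt_of_le hd0 with hdz | hdp
  · -- d = 0
    have hΔ : |(∫ x, f x ∂μ₁) - ∫ x, f x ∂μ₂| ≤ 0 := by
      have htend : Filter.Tendsto (fun R : ℝ => (R+1)*d + (2*M/c)*Real.exp (-(c*R)))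
          Filter.atTop (nhds 0) := by
        have h1 : Filter.Tendsto (fun R : ℝ => -(c*R)) Filter.atTop Filter.atBot := by
          apply Filter.tendsto_neg_atBot_iff.mpr
          exact Filter.Tendsto.const_mul_atTop hc Filter.tendsto_id
        have h2 : Filter.Tendsto (fun R : ℝ => Real.exp (-(c*R))) Filter.atTop (nhds 0) :=
          Real.tendsto_exp_atBot.comp h1
        have h3 : Filter.Tendsto (fun R : ℝ => (2*M/c)*Real.exp (-(c*R))) Filter.atTop (nhds 0) := by
          simpa using h2.const_mul (2*M/c)
        have h4 : Filter.Tendsto (fun R : ℝ => (R+1)*d) Filter.atTop (nhds 0) := by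
          simp only [← hdz, mul_zero]
          exact tendsto_const_nhds
        simpa using h4.add h3
      refine ge_of_tendsto htend ?_
      filter_upwards [Filter.eventually_ge_atTop (0:ℝ)] with R hR
      exact key R hR
    calc |(∫ x, f x ∂μ₁) - ∫ x, f x ∂μ₂| ≤ 0 := hΔ
      _ ≤ (1/c + 2 + 2*M/c) * Real.sqrt d := by positivity
  · -- d > 0
    set s := Real.sqrt d with hs
    have hs0 : 0 < s := Real.sqrt_pos.mpr hdp
    have hss : s * s = d := Real.mul_self_sqrt hd0
    have hs2 : s ≤ 2 := by
      nlinarith [hss, hd2, hs0]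
    set R := max 0 (-(Real.log s)/c) with hR
    have hR0 : 0 ≤ R := le_max_left _ _
    have hexp_le : Real.exp (-(c*R)) ≤ s := by
      have h1 : -(Real.log s)/c ≤ R := le_max_right _ _
      have h2 : -(c*R) ≤ Real.log s := by
        rw [div_le_iff₀ hc] at h1
        nlinarith
      calc Real.exp (-(c*R)) ≤ Real.exp (Real.log s) := Real.exp_le_exp.mpr h2
        _ = s := Real.exp_log hs0
    have hRd : R * d ≤ s / c := by
      rcases le_or_gt (-(Real.log s)/c) 0 with h | h
      · have : R = 0 := max_eq_left h
        rw [this, zero_mul]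
        positivity
      · have hReq : R = -(Real.log s)/c := max_eq_right h.le
        have hlog : Real.log (1/s) ≤ 1/s - 1 := Real.log_le_sub_one_of_pos (by positivity)
        have hlinv : Real.log (1/s) = -(Real.log s) := by
          rw [one_div, Real.log_inv]
        rw [hlinv] at hlog
        have h1 : -Real.log s * d ≤ (1/s - 1) * d := mul_le_mul_of_nonneg_right hlog hd0
        have h3 : (1/s) * (s*s) = s := by field_simp
        have h2 : (1/s - 1) * d ≤ s := by
          rw [← hss]
          nlinarith [mul_self_nonneg s]
        have h4 : -Real.log s * d ≤ s := le_trans h1 h2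
        rw [hReq, div_mul_eq_mul_div]
        gcongr
    have hds : d ≤ 2 * s := by nlinarith
    calc |(∫ x, f x ∂μ₁) - ∫ x, f x ∂μ₂|
        ≤ (R+1)*d + (2*M/c)*Real.exp (-(c*R)) := key R hR0
      _ = R*d + d + (2*M/c)*Real.exp (-(c*R)) := by ring
      _ ≤ s/c + 2*s + (2*M/c)*s := by
          have e3 : (2*M/c)*Real.exp (-(c*R)) ≤ (2*M/c)*s :=
            mul_le_mul_of_nonneg_left hexp_le (by positivity)
          linarith [hRd, hds]
      _ = (1/c + 2 + 2*M/c) * s := by ring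
end
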